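/- Let C = 17/16. Let g, v, w ∈ ℝⁿ be vectors with nonnegative entries, and let X_a, X_b be positive real numbers satisfying X_a ≤ ‖g+v‖₂ ≤ C·X_a, X_b ≤ ‖v‖₂ ≤ C·X_b, and X_a ≤ C·X_b. Then ‖g+v+w‖₂ ≤ 2·‖v+w‖₂. -/

import Mathlib

open RealInnerProductSpace


/-- Smoothness of the L₂ norm (Braverman–Ostrovsky): with `C = 17/16`, if `Xₐ` is a
`C`-approximation of `‖g + v‖₂`, `X_b` is a `C`-approximation of `‖v‖₂`, and
`Xₐ ≤ C · X_b`, then for any further nonnegative vector `w` we have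
`‖g + v + w‖₂ ≤ 2 · ‖v + w‖₂`. -/
theorem l2_smoothness (n : ℕ) (g v w : EuclideanSpace ℝ (Fin n))
    (hg : ∀ i, 0 ≤ g i) (hv : ∀ i, 0 ≤ v i) (hw : ∀ i, 0 ≤ w i)
    (Xa Xb : ℝ) (hXa : 0 < Xa) (hXb : 0 < Xb)
    (hXa1 : Xa ≤ ‖g + v‖) (hXa2 : ‖g + v‖ ≤ (17 / 16) * Xa)
    (hXb1 : Xb ≤ ‖v‖) (hXb2 : ‖v‖ ≤ (17 / 16) * Xb)
    (hab : Xa ≤ (17 / 16) * Xb) :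
    ‖g + v + w‖ ≤ 2 * ‖v + w‖ := by
  have hgv : ‖g + v‖ ≤ (289 / 256) * ‖v‖ := by nlinarith
  have hvw : (0:ℝ) ≤ ⟪v, w⟫ := by
    rw [PiLp.inner_apply]
    exact Finset.sum_nonneg fun i _ => mul_nonneg (hw i) (hv i)
  have hcs : ⟪g + v, w⟫ ≤ ‖g + v‖ * ‖w‖ := real_inner_le_norm _ _
  have h1 : ‖g + v + w‖ ^ 2 = ‖g + v‖ ^ 2 + 2 * ⟪g + v, w⟫ + ‖w‖ ^ 2 :=
    norm_add_sq_real _ _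
  have h2 : ‖v + w‖ ^ 2 = ‖v‖ ^ 2 + 2 * ⟪v, w⟫ + ‖w‖ ^ 2 :=
    norm_add_sq_real _ _
  have hn1 : (0:ℝ) ≤ ‖g + v + w‖ := norm_nonneg _
  have hn2 : (0:ℝ) ≤ ‖v + w‖ := norm_nonneg _
  have hnv : (0:ℝ) ≤ ‖v‖ := norm_nonneg _
  have hnw : (0:ℝ) ≤ ‖w‖ := norm_nonneg _
  have hngv : (0:ℝ) ≤ ‖g + v‖ := norm_nonneg _
  nlinarith [sq_nonneg (‖v‖ - ‖w‖), sq_nonneg (‖v‖ + ‖w‖), mul_nonneg hnv hnw]
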